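/- For finite-dimensional posets P and Q, bd-dim(P × Q) = bd-dim(P) + bd-dim(Q). -/

import Mathlib

universe u

/-- The order dimension of a poset: the least cardinal `κ` such that the partial
order is the intersection of `κ` linear orderings (each extending it). -/
noncomputable def orderDim (α : Type u) [PartialOrder α] : Cardinal.{u} :=
  sInf {κ : Cardinal.{u} | ∃ (ι : Type u) (r : ι → α → α → Prop),
    (∀ i, IsLinearOrder α (r i)) ∧
    (∀ x y : α, x ≤ y ↔ ∀ i, r i x y) ∧
    Cardinal.mk ι = κ}

/-- The absorbency of a (finite-dimensional) poset `P`: the largest natural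
number `n` such that taking the product of `P` with any `n`-tuple of (nonempty)
chains does not change the dimension. -/
noncomputable def absorb (P : Type u) [PartialOrder P] : ℕ :=
  sSup {n : ℕ | ∀ (T : Fin n → Type u) [∀ i, LinearOrder (T i)] [∀ i, Nonempty (T i)],
    orderDim (P × ∀ i, T i) = orderDim P}

/-- The bounded dimension of a (finite-dimensional) poset `P`: the greatest
natural number `n` such that some bounded subposet of `P` (equivalently, some
nonempty interval `[p, p']`) has dimension `n`. -/
noncomputable def bdDim (P : Type u) [PartialOrder P] : ℕ :=
  sSup {n : ℕ | ∃ p p' : P, p ≤ p' ∧ orderDim ↥(Set.Icc p p') = n}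

section Aux

open Cardinal

variable {α β : Type u} [PartialOrder α] [PartialOrder β]

/-- The set of cardinals of realizers. -/
def realizerSet (α : Type u) [PartialOrder α] : Set Cardinal.{u} :=
  {κ : Cardinal.{u} | ∃ (ι : Type u) (r : ι → α → α → Prop),
    (∀ i, IsLinearOrder α (r i)) ∧
    (∀ x y : α, x ≤ y ↔ ∀ i, r i x y) ∧
    Cardinal.mk ι = κ}

lemma orderDim_eq_sInf (α : Type u) [PartialOrder α] :
    orderDim α = sInf (realizerSet α) := rfl

/-- Szpilrajn-type lemma: if `¬ x ≤ y` there is a linear extension putting `y` below `x`. -/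
lemma exists_linear_ext_reversing {x y : α} (h : ¬ x ≤ y) :
    ∃ s : α → α → Prop, IsLinearOrder α s ∧ (∀ a b, a ≤ b → s a b) ∧ ¬ s x y := by
  set t : α → α → Prop := fun a b => a ≤ b ∨ (a ≤ y ∧ x ≤ b) with ht
  haveI : IsPartialOrder α t :=
    { refl := fun a => Or.inl le_rfl
      trans := by
        rintro a b c (hab | ⟨hay, hxb⟩) (hbc | ⟨hby, hxc⟩)
        · exact Or.inl (hab.trans hbc)
        · exact Or.inr ⟨hab.trans hby, hxc⟩
        · exact Or.inr ⟨hay, hxb.trans hbc⟩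
        · exact absurd (hxb.trans hby) h
      antisymm := by
        rintro a b (hab | ⟨hay, hxb⟩) (hba | ⟨hby, hxa⟩)
        · exact le_antisymm hab hba
        · exact absurd ((hxa.trans hab).trans hby) h
        · exact absurd ((hxb.trans hba).trans hay) h
        · exact absurd (hxb.trans hby) h }
  obtain ⟨s, hs, hts⟩ := extend_partialOrder t
  refine ⟨s, hs, fun a b hab => hts _ _ (Or.inl hab), fun hxy => ?_⟩
  have hyx : s y x := hts _ _ (Or.inr ⟨le_refl y, le_refl x⟩)
  haveI := hs
  exact h (le_of_eq (antisymm hxy hyx))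

lemma realizerSet_nonempty (α : Type u) [PartialOrder α] : (realizerSet α).Nonempty := by
  classical
  refine ⟨_, {s : α → α → Prop // IsLinearOrder α s ∧ ∀ a b, a ≤ b → s a b},
    fun i => i.1, fun i => i.2.1, ?_, rfl⟩
  intro x y
  constructor
  · exact fun h i => i.2.2 _ _ h
  · intro h
    by_contra hxy
    obtain ⟨s, hs1, hs2, hs3⟩ := exists_linear_ext_reversing hxy
    exact hs3 (h ⟨s, hs1, hs2⟩)

lemma exists_realizer (α : Type u) [PartialOrder α] :
    ∃ (ι : Type u) (r : ι → α → α → Prop),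
      (∀ i, IsLinearOrder α (r i)) ∧
      (∀ x y : α, x ≤ y ↔ ∀ i, r i x y) ∧
      Cardinal.mk ι = orderDim α := by
  have := csInf_mem (realizerSet_nonempty α)
  rw [← orderDim_eq_sInf] at this
  exact this

lemma orderDim_le_mk {ι : Type u} (r : ι → α → α → Prop)
    (hlin : ∀ i, IsLinearOrder α (r i))
    (hiff : ∀ x y : α, x ≤ y ↔ ∀ i, r i x y) :
    orderDim α ≤ Cardinal.mk ι := by
  rw [orderDim_eq_sInf]
  exact csInf_le ⟨0, fun κ _ => (zero_le : (0 : Cardinal) ≤ κ)⟩ ⟨ι, r, hlin, hiff, rfl⟩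

lemma orderDim_le_of_embedding (f : α ↪o β) : orderDim α ≤ orderDim β := by
  obtain ⟨ι, r, hlin, hiff, hmk⟩ := exists_realizer β
  rw [← hmk]
  refine orderDim_le_mk (fun i a b => r i (f a) (f b)) (fun i => ?_) (fun a b => ?_)
  · haveI := hlin i
    exact
      { refl := fun a => refl_of (r i) _
        trans := fun a b c hab hbc => trans_of (r i) hab hbc
        antisymm := fun a b hab hba => f.injective (antisymm hab hba)
        total := fun a b => total_of (r i) _ _ }
  · rw [← f.le_iff_le, hiff]

lemma orderDim_eq_of_iso (e : α ≃o β) : orderDim α = orderDim β :=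
  le_antisymm (orderDim_le_of_embedding e.toOrderEmbedding)
    (orderDim_le_of_embedding e.symm.toOrderEmbedding)

lemma lex_isLinearOrder {γ δ : Type u} [PartialOrder γ] [PartialOrder δ]
    (r : γ → γ → Prop) (s : δ → δ → Prop)
    (hr : IsLinearOrder γ r) (hs : IsLinearOrder δ s) :
    IsLinearOrder (γ × δ) (fun x y => r x.1 y.1 ∧ (x.1 = y.1 → s x.2 y.2)) := by
  haveI := hr; haveI := hs
  refine { refl := ?_, trans := ?_, antisymm := ?_, total := ?_ }
  · exact fun x => ⟨refl_of r _, fun _ => refl_of s _⟩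
  · rintro x y z ⟨h1, h2⟩ ⟨h3, h4⟩
    refine ⟨trans_of r h1 h3, fun hxz => ?_⟩
    have e1 : x.1 = y.1 := antisymm h1 (hxz ▸ h3)
    have e2 : y.1 = z.1 := e1 ▸ hxz
    exact trans_of s (h2 e1) (h4 e2)
  · rintro x y ⟨h1, h2⟩ ⟨h3, h4⟩
    have e1 : x.1 = y.1 := antisymm h1 h3
    have e2 : x.2 = y.2 := antisymm (h2 e1) (h4 e1.symm)
    exact Prod.ext e1 e2
  · intro x y
    rcases total_of r x.1 y.1 with h | h
    · by_cases he : x.1 = y.1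
      · rcases total_of s x.2 y.2 with h' | h'
        · exact Or.inl ⟨h, fun _ => h'⟩
        · exact Or.inr ⟨he ▸ refl_of r _, fun _ => h'⟩
      · exact Or.inl ⟨h, fun he' => absurd he' he⟩
    · by_cases he : y.1 = x.1
      · rcases total_of s x.2 y.2 with h' | h'
        · exact Or.inl ⟨he ▸ refl_of r _, fun _ => h'⟩
        · exact Or.inr ⟨h, fun _ => h'⟩
      · exact Or.inr ⟨h, fun he' => absurd he' he⟩

lemma orderDim_prod_le : orderDim (α × β) ≤ orderDim α + orderDim β := by
  obtain ⟨ιa, ra, hlina, hiffa, hmka⟩ := exists_realizer α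
  obtain ⟨ιb, rb, hlinb, hiffb, hmkb⟩ := exists_realizer β
  obtain ⟨ta, hta, htale⟩ := extend_partialOrder ((· ≤ ·) : α → α → Prop)
  obtain ⟨tb, htb, htble⟩ := extend_partialOrder ((· ≤ ·) : β → β → Prop)
  have key : orderDim (α × β) ≤ Cardinal.mk (ιa ⊕ ιb) := by
    refine orderDim_le_mk
      (fun i => Sum.rec
        (fun i x y => ra i x.1 y.1 ∧ (x.1 = y.1 → tb x.2 y.2))
        (fun j x y => rb j x.2 y.2 ∧ (x.2 = y.2 → ta x.1 y.1)) i)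
      (fun i => ?_) (fun x y => ?_)
    · cases i with
      | inl i => exact lex_isLinearOrder _ _ (hlina i) htb
      | inr j =>
        have H := lex_isLinearOrder (γ := β) (δ := α) _ _ (hlinb j) hta
        exact
          { refl := fun x => H.refl (x.2, x.1)
            trans := fun x y z h1 h2 => H.trans (x.2, x.1) (y.2, y.1) (z.2, z.1) h1 h2
            antisymm := fun x y h1 h2 => by
              have e := H.antisymm (x.2, x.1) (y.2, y.1) h1 h2
              exact Prod.ext (congrArg Prod.snd e) (congrArg Prod.fst e)
            total := fun x y => H.total (x.2, x.1) (y.2, y.1) }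
    · constructor
      · intro h i
        have h1 : x.1 ≤ y.1 := h.1
        have h2 : x.2 ≤ y.2 := h.2
        cases i with
        | inl i => exact ⟨(hiffa x.1 y.1).1 h1 i, fun _ => htble _ _ h2⟩
        | inr j => exact ⟨(hiffb x.2 y.2).1 h2 j, fun _ => htale _ _ h1⟩
      · intro h
        have h1 : x.1 ≤ y.1 := (hiffa x.1 y.1).2 fun i => (h (Sum.inl i)).1
        have h2 : x.2 ≤ y.2 := (hiffb x.2 y.2).2 fun j => (h (Sum.inr j)).1
        exact ⟨h1, h2⟩
  refine key.trans ?_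
  rw [Cardinal.mk_sum, Cardinal.lift_id, Cardinal.lift_id, hmka, hmkb]

lemma add_le_orderDim_prod [BoundedOrder α] [BoundedOrder β] :
    orderDim α + orderDim β ≤ orderDim (α × β) := by
  obtain ⟨ι, L, hlin, hiff, hmk⟩ := exists_realizer (α × β)
  have hle : ∀ (k : ι) (x y : α × β), x ≤ y → L k x y := fun k x y h => (hiff x y).1 h k
  set KP : Set ι := {k | ∃ a a' : α, a ≠ a' ∧ L k (a, (⊤ : β)) (a', (⊥ : β))} with hKP
  set KQ : Set ι := {k | ∃ b b' : β, b ≠ b' ∧ L k ((⊤ : α), b) ((⊥ : α), b')} with hKQ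
  have dimA : orderDim α ≤ Cardinal.mk ↥KP := by
    refine orderDim_le_mk (fun k a a' => L k.1 (a, (⊥ : β)) (a', (⊥ : β)))
      (fun k => ?_) (fun a a' => ?_)
    · haveI := hlin k.1
      exact
        { refl := fun a => refl_of (L k.1) _
          trans := fun a b c h1 h2 => trans_of (L k.1) h1 h2
          antisymm := fun a b h1 h2 => congrArg Prod.fst (antisymm h1 h2)
          total := fun a b => total_of (L k.1) _ _ }
    · constructor
      · exact fun h k => hle k.1 _ _ ⟨h, le_refl _⟩
      · intro hall
        by_contra hne
        have hnle : ¬ ((a, (⊥ : β)) ≤ (a', (⊤ : β))) := fun h => hne h.1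
        rw [hiff] at hnle
        push_neg at hnle
        obtain ⟨k, hk⟩ := hnle
        haveI := hlin k
        have hrev : L k (a', (⊤ : β)) (a, (⊥ : β)) := (total_of (L k) _ _).resolve_left hk
        have hne' : a' ≠ a := fun e => hne (le_of_eq e.symm)
        have hkP : k ∈ KP := ⟨a', a, hne', hrev⟩
        have h1 : L k (a', (⊥ : β)) (a, (⊥ : β)) :=
          trans_of (L k) (hle k _ _ ⟨le_refl a', bot_le⟩) hrev
        have h2 := hall ⟨k, hkP⟩
        have : a = a' := congrArg Prod.fst (antisymm h2 h1)
        exact hne (le_of_eq this)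
  have dimB : orderDim β ≤ Cardinal.mk ↥KQ := by
    refine orderDim_le_mk (fun k b b' => L k.1 ((⊥ : α), b) ((⊥ : α), b'))
      (fun k => ?_) (fun b b' => ?_)
    · haveI := hlin k.1
      exact
        { refl := fun a => refl_of (L k.1) _
          trans := fun a b c h1 h2 => trans_of (L k.1) h1 h2
          antisymm := fun a b h1 h2 => congrArg Prod.snd (antisymm h1 h2)
          total := fun a b => total_of (L k.1) _ _ }
    · constructor
      · exact fun h k => hle k.1 _ _ ⟨le_refl _, h⟩
      · intro hall
        by_contra hne
        have hnle : ¬ (((⊥ : α), b) ≤ ((⊤ : α), b')) := fun h => hne h.2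
        rw [hiff] at hnle
        push_neg at hnle
        obtain ⟨k, hk⟩ := hnle
        haveI := hlin k
        have hrev : L k ((⊤ : α), b') ((⊥ : α), b) := (total_of (L k) _ _).resolve_left hk
        have hne' : b' ≠ b := fun e => hne (le_of_eq e.symm)
        have hkQ : k ∈ KQ := ⟨b', b, hne', hrev⟩
        have h1 : L k ((⊥ : α), b') ((⊥ : α), b) :=
          trans_of (L k) (hle k _ _ ⟨bot_le, le_refl b'⟩) hrev
        have h2 := hall ⟨k, hkQ⟩
        have : b = b' := congrArg Prod.snd (antisymm h2 h1)
        exact hne (le_of_eq this)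
  have hdisj : Disjoint KP KQ := by
    rw [Set.disjoint_left]
    rintro k ⟨a, a', ha, h1⟩ ⟨b, b', hb, h2⟩
    haveI := hlin k
    have huv : L k (a', b) (a, b') :=
      trans_of (L k) (hle k _ _ ⟨le_top, le_refl b⟩)
        (trans_of (L k) h2 (hle k _ _ ⟨bot_le, le_refl b'⟩))
    have hvu : L k (a, b') (a', b) :=
      trans_of (L k) (hle k _ _ ⟨le_refl a, le_top⟩)
        (trans_of (L k) h1 (hle k _ _ ⟨le_refl a', bot_le⟩))
    have : (a', b) = (a, b') := antisymm huv hvu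
    exact ha (congrArg Prod.fst this).symm
  calc orderDim α + orderDim β ≤ Cardinal.mk ↥KP + Cardinal.mk ↥KQ :=
        add_le_add dimA dimB
    _ = Cardinal.mk ↥(KP ∪ KQ) := (Cardinal.mk_union_of_disjoint hdisj).symm
    _ ≤ Cardinal.mk ι := Cardinal.mk_set_le _
    _ = orderDim (α × β) := hmk

lemma orderDim_prod [BoundedOrder α] [BoundedOrder β] :
    orderDim (α × β) = orderDim α + orderDim β :=
  le_antisymm orderDim_prod_le add_le_orderDim_prod

/-- The interval in a product is order-isomorphic to the product of intervals. -/
def iccProdIso (p p' : α) (q q' : β) :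
    ↥(Set.Icc (p, q) (p', q')) ≃o ↥(Set.Icc p p') × ↥(Set.Icc q q') where
  toFun x := (⟨x.1.1, x.2.1.1, x.2.2.1⟩, ⟨x.1.2, x.2.1.2, x.2.2.2⟩)
  invFun y := ⟨(y.1.1, y.2.1), ⟨⟨y.1.2.1, y.2.2.1⟩, ⟨y.1.2.2, y.2.2.2⟩⟩⟩
  left_inv x := rfl
  right_inv y := rfl
  map_rel_iff' := by
    intro x y
    simp only [Equiv.coe_fn_mk, Prod.mk_le_mk, Subtype.mk_le_mk, Prod.le_def]
    rfl

end Aux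

theorem stmt16 (P Q : Type u) [PartialOrder P] [Nonempty P] [PartialOrder Q] [Nonempty Q]
    (hP : orderDim P < Cardinal.aleph0) (hQ : orderDim Q < Cardinal.aleph0) :
    bdDim (P × Q) = bdDim P + bdDim Q := by
  classical
  -- dimension of any interval is finite
  have hIcc : ∀ (R : Type u) [PartialOrder R], orderDim R < Cardinal.aleph0 →
      ∀ p p' : R, ∃ n : ℕ, orderDim ↥(Set.Icc p p') = (n : Cardinal) := by
    intro R _ hR p p'
    have hle : orderDim ↥(Set.Icc p p') ≤ orderDim R :=
      orderDim_le_of_embedding (OrderEmbedding.subtype _)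
    exact Cardinal.lt_aleph0.1 (lt_of_le_of_lt hle hR)
  have hPQ : orderDim (P × Q) < Cardinal.aleph0 :=
    lt_of_le_of_lt orderDim_prod_le (Cardinal.add_lt_aleph0 hP hQ)
  -- the defining sets
  set SP := {n : ℕ | ∃ p p' : P, p ≤ p' ∧ orderDim ↥(Set.Icc p p') = n} with hSP
  set SQ := {n : ℕ | ∃ p p' : Q, p ≤ p' ∧ orderDim ↥(Set.Icc p p') = n} with hSQ
  set SPQ := {n : ℕ | ∃ p p' : P × Q, p ≤ p' ∧ orderDim ↥(Set.Icc p p') = n} with hSPQ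
  have bddS : ∀ (R : Type u) [PartialOrder R], orderDim R < Cardinal.aleph0 →
      BddAbove {n : ℕ | ∃ p p' : R, p ≤ p' ∧ orderDim ↥(Set.Icc p p') = n} := by
    intro R _ hR
    obtain ⟨n₀, hn₀⟩ := Cardinal.lt_aleph0.1 hR
    refine ⟨n₀, fun n hn => ?_⟩
    obtain ⟨p, p', _, hdim⟩ := hn
    have hle : orderDim ↥(Set.Icc p p') ≤ orderDim R :=
      orderDim_le_of_embedding (OrderEmbedding.subtype _)
    rw [hdim, hn₀] at hle
    exact_mod_cast hle
  have neS : ∀ (R : Type u) [PartialOrder R] [Nonempty R], orderDim R < Cardinal.aleph0 →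
      {n : ℕ | ∃ p p' : R, p ≤ p' ∧ orderDim ↥(Set.Icc p p') = n}.Nonempty := by
    intro R _ _ hR
    obtain ⟨p⟩ := ‹Nonempty R›
    obtain ⟨n, hn⟩ := hIcc R hR p p
    exact ⟨n, p, p, le_refl p, hn⟩
  have hSPne := neS P hP
  have hSQne := neS Q hQ
  have hSPbdd := bddS P hP
  have hSQbdd := bddS Q hQ
  have hSPQbdd := bddS (P × Q) hPQ
  -- sSup attained
  have hmemP : bdDim P ∈ SP := Nat.sSup_mem hSPne hSPbdd
  have hmemQ : bdDim Q ∈ SQ := Nat.sSup_mem hSQne hSQbdd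
  obtain ⟨p, p', hpp, hdimp⟩ := hmemP
  obtain ⟨q, q', hqq, hdimq⟩ := hmemQ
  apply le_antisymm
  · -- every element of SPQ is ≤ bdDim P + bdDim Q
    refine csSup_le (neS (P × Q) hPQ) ?_
    rintro n ⟨⟨a, b⟩, ⟨a', b'⟩, hle, hdim⟩
    have ha : a ≤ a' := hle.1
    have hb : b ≤ b' := hle.2
    haveI : Fact (a ≤ a') := ⟨ha⟩
    haveI : Fact (b ≤ b') := ⟨hb⟩
    obtain ⟨m, hm⟩ := hIcc P hP a a'
    obtain ⟨k, hk⟩ := hIcc Q hQ b b'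
    have heq : orderDim ↥(Set.Icc (a, b) (a', b')) =
        orderDim ↥(Set.Icc a a') + orderDim ↥(Set.Icc b b') := by
      rw [orderDim_eq_of_iso (iccProdIso a a' b b'), orderDim_prod]
    rw [hdim, hm, hk] at heq
    have : n = m + k := by exact_mod_cast heq
    have hm' : m ≤ bdDim P := le_csSup hSPbdd ⟨a, a', ha, hm⟩
    have hk' : k ≤ bdDim Q := le_csSup hSQbdd ⟨b, b', hb, hk⟩
    omega
  · -- bdDim P + bdDim Q is an element of SPQ
    haveI : Fact (p ≤ p') := ⟨hpp⟩
    haveI : Fact (q ≤ q') := ⟨hqq⟩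
    have heq : orderDim ↥(Set.Icc (p, q) (p', q')) =
        ((bdDim P + bdDim Q : ℕ) : Cardinal) := by
      rw [orderDim_eq_of_iso (iccProdIso p p' q q'), orderDim_prod, hdimp, hdimq]
      push_cast
      rfl
    exact le_csSup hSPQbdd ⟨(p, q), (p', q'), ⟨hpp, hqq⟩, heq⟩
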